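/- For positive integers n and i, there exists a unique i-binomial expansion of n, i.e., unique integers n_i > n_{i-1} > ... > n_j ≥ j ≥ 1 such that n = C(n_i, i) + C(n_{i-1}, i-1) + ... + C(n_j, j). -/

import Mathlib

/-- `ns = [n_i, n_{i-1}, …, n_j]` is the list of "tops" of the `i`-binomial
(Macaulay) expansion of `n`:  the tops are strictly decreasing, the bottoms are
`i, i-1, …, j` with `j = i - ns.length + 1 ≥ 1`, the last top `n_j` satisfies
`n_j ≥ j`, and `n = C(n_i,i) + C(n_{i-1},i-1) + ⋯ + C(n_j,j)`. -/
def IsBinomialExpansion (n i : ℕ) (ns : List ℕ) : Prop :=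
  ns ≠ [] ∧ ns.length ≤ i ∧ ns.Chain' (· > ·) ∧
  i + 1 ≤ ns.getLast! + ns.length ∧
  n = ∑ k ∈ Finset.range ns.length, (ns.getD k 0).choose (i - k)

/-- `MacaulayNext n i m` says `m = n^{<i>}`, computed from the `i`-binomial
expansion of `n` by `n^{<i>} = C(n_i+1,i+1) + ⋯ + C(n_j+1,j+1)`. -/
def MacaulayNext (n i m : ℕ) : Prop :=
  ∃ ns, IsBinomialExpansion n i ns ∧
    m = ∑ k ∈ Finset.range ns.length, (ns.getD k 0 + 1).choose (i - k + 1)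

/-- `MacaulayLE a i b` says `b ≤ a^{<i>}`, with the convention `0^{<i>} = 0`. -/
def MacaulayLE (a i b : ℕ) : Prop :=
  if a = 0 then b = 0 else ∃ m, MacaulayNext a i m ∧ b ≤ m

/-- `(c 0, c 1, …, c e)` is an O-sequence (satisfies Macaulay's condition). -/
def IsOSequence (c : ℕ → ℕ) (e : ℕ) : Prop :=
  c 0 = 1 ∧ ∀ i, 1 ≤ i → i + 1 ≤ e → MacaulayLE (c i) i (c (i + 1))

/-- `(H 0, …, H e)` is symmetric. -/
def IsSymmetric (H : ℕ → ℕ) (e : ℕ) : Prop :=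
  ∀ i ≤ e, H i = H (e - i)

/-- `(H 0, …, H e)` is unimodal. -/
def IsUnimodal (H : ℕ → ℕ) (e : ℕ) : Prop :=
  ∃ m, m ≤ e ∧ (∀ i, i < m → H i ≤ H (i + 1)) ∧
    ∀ i, m ≤ i → i < e → H (i + 1) ≤ H i

/-- The first difference of `H` (with `H_{-1} = 0`). -/
def FirstDiff (H : ℕ → ℕ) : ℕ → ℕ :=
  fun i => if i = 0 then H 0 else H i - H (i - 1)

/-- `(H 0, …, H e)` is an SI-sequence: it is symmetric and the first
difference of its first half `(H 0, …, H ⌊e/2⌋)` is an O-sequence. -/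
def IsSISequence (H : ℕ → ℕ) (e : ℕ) : Prop :=
  IsSymmetric H e ∧ IsOSequence (FirstDiff H) (e / 2)

private def binSum (i : ℕ) (l : List ℕ) : ℕ :=
  ∑ k ∈ Finset.range l.length, (l.getD k 0).choose (i - k)

private lemma isBE_iff (n i : ℕ) (ns : List ℕ) :
    IsBinomialExpansion n i ns ↔ ns ≠ [] ∧ ns.length ≤ i ∧ ns.Chain' (· > ·) ∧
      i + 1 ≤ ns.getLast! + ns.length ∧ n = binSum i ns := Iff.rfl

private lemma binSum_cons (i a : ℕ) (l : List ℕ) :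
    binSum i (a :: l) = a.choose i + binSum (i-1) l := by
  unfold binSum
  rw [List.length_cons, Finset.sum_range_succ']
  simp only [List.getD_cons_succ, List.getD_cons_zero, Nat.sub_zero]
  rw [add_comm]
  congr 1
  refine Finset.sum_congr rfl fun k _ => ?_
  congr 1
  omega

private lemma getLast!_cons_cons (a b : ℕ) (t : List ℕ) :
    (a :: b :: t).getLast! = (b :: t).getLast! := by
  simp [List.getLast!]

private lemma binSum_nil (i : ℕ) : binSum i [] = 0 := rfl

private lemma bounds : ∀ (l : List ℕ) (i : ℕ), l ≠ [] → l.length ≤ i →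
    l.Chain' (· > ·) → i + 1 ≤ l.getLast! + l.length →
    i ≤ l.head! ∧ binSum i l < (l.head! + 1).choose i := by
  intro l
  induction l with
  | nil => intro i h; exact absurd rfl h
  | cons a l ih =>
    intro i _ hlen hch hlast
    match l with
    | [] =>
        simp only [List.head!_cons, binSum_cons, binSum_nil, Nat.add_zero]
        have hla : (([a] : List ℕ)).getLast! = a := by simp [List.getLast!]
        rw [hla] at hlast
        have hia : i ≤ a := by simp at hlast ⊢; omega
        have hi1 : 1 ≤ i := by simpa using hlen
        obtain ⟨j, rfl⟩ : ∃ j, i = j + 1 := ⟨i - 1, by omega⟩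
        constructor
        · exact hia
        · rw [Nat.choose_succ_succ']
          have : 0 < a.choose j := Nat.choose_pos (by omega)
          omega
    | b :: t =>
        have hi2 : 2 ≤ i := le_trans (by simp) hlen
        have hab : a > b := (List.isChain_cons_cons.mp hch).1
        have hch' : (b :: t).Chain' (· > ·) := (List.isChain_cons_cons.mp hch).2
        have hlast' : (i - 1) + 1 ≤ (b :: t).getLast! + (b :: t).length := by
          rw [getLast!_cons_cons] at hlast
          simp only [List.length_cons] at hlast ⊢
          omega
        have hlen' : (b :: t).length ≤ i - 1 := by
          simp only [List.length_cons] at hlen ⊢; omega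
        obtain ⟨hhead, hub⟩ := ih (i - 1) (by simp) hlen' hch' hlast'
        simp only [List.head!_cons] at hhead hub ⊢
        have hia : i ≤ a := by omega
        constructor
        · exact hia
        · rw [binSum_cons]
          obtain ⟨j, rfl⟩ : ∃ j, i = j + 1 := ⟨i - 1, by omega⟩
          simp only [Nat.add_sub_cancel] at hub ⊢
          have h1 : (b + 1).choose j ≤ a.choose j :=
            Nat.choose_le_choose j (by omega)
          rw [Nat.choose_succ_succ' (a)]
          omega

private lemma tail_exp {n i a : ℕ} {l : List ℕ} (hl : l ≠ [])
    (h : IsBinomialExpansion n i (a :: l)) :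
    IsBinomialExpansion (n - a.choose i) (i-1) l := by
  obtain ⟨-, hlen, hch, hlast, hsum⟩ := (isBE_iff _ _ _).mp h
  rw [binSum_cons] at hsum
  simp only [List.length_cons] at hlen hlast
  have hi2 : 2 ≤ i := by
    have : 1 ≤ l.length := List.length_pos_iff.mpr hl
    omega
  refine (isBE_iff _ _ _).mpr ⟨hl, by omega, hch.tail, ?_, by omega⟩
  obtain ⟨b, t, rfl⟩ : ∃ b t, l = b :: t := by
    cases l with | nil => exact absurd rfl hl | cons b t => exact ⟨b, t, rfl⟩
  rw [getLast!_cons_cons] at hlast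
  simp only [List.length_cons] at hlast ⊢
  omega

private lemma exp_pos {n i : ℕ} {l : List ℕ} (h : IsBinomialExpansion n i l) : 0 < n := by
  obtain ⟨hne, hlen, hch, hlast, hsum⟩ := (isBE_iff _ _ _).mp h
  obtain ⟨hhead, -⟩ := bounds l i hne hlen hch hlast
  obtain ⟨a, t, rfl⟩ : ∃ a t, l = a :: t := by
    cases l with | nil => exact absurd rfl hne | cons a t => exact ⟨a, t, rfl⟩
  rw [binSum_cons] at hsum
  simp only [List.head!_cons] at hhead
  have : 0 < a.choose i := Nat.choose_pos hhead
  omega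

private lemma exp_uniq : ∀ (l m : List ℕ) (n i : ℕ),
    IsBinomialExpansion n i l → IsBinomialExpansion n i m → l = m := by
  intro l
  induction l with
  | nil => intro m n i hl; exact absurd rfl hl.1
  | cons a l ih =>
    intro m n i hl hm
    obtain ⟨b, t, rfl⟩ : ∃ b t, m = b :: t := by
      cases m with | nil => exact absurd rfl hm.1 | cons b t => exact ⟨b, t, rfl⟩
    -- heads agree
    obtain ⟨-, hlen1, hch1, hlast1, hsum1⟩ := (isBE_iff _ _ _).mp hl
    obtain ⟨-, hlen2, hch2, hlast2, hsum2⟩ := (isBE_iff _ _ _).mp hm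
    obtain ⟨-, hub1⟩ := bounds _ i (by simp) hlen1 hch1 hlast1
    obtain ⟨-, hub2⟩ := bounds _ i (by simp) hlen2 hch2 hlast2
    simp only [List.head!_cons] at hub1 hub2
    rw [binSum_cons] at hsum1 hsum2 hub1 hub2
    have hab : a = b := by
      by_contra hne
      rcases Nat.lt_or_ge a b with hlt | hge
      · have := Nat.choose_le_choose i (show a + 1 ≤ b by omega)
        omega
      · have hlt : b < a := by omega
        have := Nat.choose_le_choose i (show b + 1 ≤ a by omega)
        omega
    subst hab
    have hsum : binSum (i-1) l = binSum (i-1) t := by omega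
    congr 1
    cases hlemp : l with
    | nil =>
      cases htemp : t with
      | nil => rfl
      | cons c u =>
        exfalso
        subst hlemp htemp
        have ht' := tail_exp (by simp) hm
        have := exp_pos ht'
        rw [binSum_nil] at hsum
        obtain ⟨-, -, -, -, hs⟩ := (isBE_iff _ _ _).mp ht'
        omega
    | cons c u =>
      subst hlemp
      cases htemp : t with
      | nil =>
        exfalso
        subst htemp
        have hl' := tail_exp (by simp) hl
        have := exp_pos hl'
        rw [binSum_nil] at hsum
        obtain ⟨-, -, -, -, hs⟩ := (isBE_iff _ _ _).mp hl'
        omega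
      | cons d v =>
        subst htemp
        have hl' := tail_exp (l := c :: u) (by simp) hl
        have ht' := tail_exp (l := d :: v) (by simp) hm
        obtain ⟨-, -, -, -, hs1⟩ := (isBE_iff _ _ _).mp hl'
        have ht'' : IsBinomialExpansion (n - a.choose i) (i-1) (d :: v) := ht'
        exact ih _ _ _ hl' ht''

private lemma choose_lb (j : ℕ) : ∀ m : ℕ, m + 1 ≤ (j + 1 + m).choose (j + 1) := by
  intro m
  induction m with
  | zero => simp
  | succ m ih =>
    have h1 : 0 < (j + 1 + m).choose j := Nat.choose_pos (by omega)
    have h2 : (j + 1 + (m + 1)).choose (j + 1)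
        = (j + 1 + m).choose j + (j + 1 + m).choose (j + 1) := by
      rw [show j + 1 + (m + 1) = (j + 1 + m) + 1 by omega, Nat.choose_succ_succ']
    omega

private lemma exp_exists : ∀ (i : ℕ), 1 ≤ i → ∀ n, 1 ≤ n → ∃ ns, IsBinomialExpansion n i ns := by
  intro i
  induction i with
  | zero => omega
  | succ i ih =>
    intro _ n hn
    rcases Nat.eq_zero_or_pos i with rfl | hi
    · refine ⟨[n], (isBE_iff _ _ _).mpr ⟨by simp, by simp, List.isChain_singleton _, ?_, ?_⟩⟩
      · simp [List.getLast!]; omega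
      · simp [binSum_cons, binSum_nil]
    · have hle : i + 1 ≤ n + i := by omega
      have hbase : (i+1).choose (i+1) ≤ n := by rw [Nat.choose_self]; exact hn
      set a := Nat.findGreatest (fun m => m.choose (i+1) ≤ n) (n + i) with ha_def
      have ha1 : i + 1 ≤ a := Nat.le_findGreatest (P := fun m => m.choose (i+1) ≤ n) hle hbase
      have haP : a.choose (i+1) ≤ n := Nat.findGreatest_spec (P := fun m => m.choose (i+1) ≤ n) hle hbase
      have hub : n < (a+1).choose (i+1) := by
        rcases le_or_gt (a+1) (n+i) with h | h
        · by_contra h'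
          push_neg at h'
          exact Nat.findGreatest_is_greatest (P := fun m => m.choose (i+1) ≤ n) (by omega) h h'
        · have hc := choose_lb i (a + 1 - (i+1))
          rw [show i + 1 + (a + 1 - (i + 1)) = a + 1 by omega] at hc
          omega
      set n' := n - a.choose (i+1) with hn'_def
      rcases Nat.eq_zero_or_pos n' with h0 | hpos
      · refine ⟨[a], (isBE_iff _ _ _).mpr ⟨by simp, by simp, List.isChain_singleton _, ?_, ?_⟩⟩
        · simp [List.getLast!]; omega
        · rw [binSum_cons, binSum_nil]; omega
      · obtain ⟨ms, hms⟩ := ih hi n' hpos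
        obtain ⟨c, t, rfl⟩ : ∃ c t, ms = c :: t := by
          cases ms with | nil => exact absurd rfl hms.1 | cons c t => exact ⟨c, t, rfl⟩
        obtain ⟨-, hlen, hch, hlast, hsum⟩ := (isBE_iff _ _ _).mp hms
        rw [binSum_cons] at hsum
        have hsplit : (a+1).choose (i+1) = a.choose i + a.choose (i+1) :=
          Nat.choose_succ_succ' a i
        have hca : c < a := by
          by_contra hge
          push_neg at hge
          have := Nat.choose_le_choose i hge
          have hcpos : c.choose i ≤ n' := by omega
          omega
        refine ⟨a :: c :: t, (isBE_iff _ _ _).mpr ⟨by simp, ?_, ?_, ?_, ?_⟩⟩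
        · simp only [List.length_cons] at hlen ⊢; omega
        · exact List.isChain_cons_cons.mpr ⟨hca, hch⟩
        · rw [getLast!_cons_cons]
          simp only [List.length_cons] at hlast ⊢
          omega
        · rw [binSum_cons]
          simp only [Nat.add_sub_cancel]
          rw [binSum_cons]
          omega

/-- For positive integers `n` and `i`, the `i`-binomial expansion of `n`
exists and is unique. -/
theorem binomial_expansion_exists_unique (n i : ℕ) (hn : 0 < n) (hi : 0 < i) :
    ∃! ns : List ℕ, IsBinomialExpansion n i ns := by
  obtain ⟨ns, hns⟩ := exp_exists i hi n hn
  exact ⟨ns, hns, fun ms hms => exp_uniq ms ns n i hms hns⟩
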